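/- arXiv:1811.05373 — 2 statements merged into one kernel-verified Lean document; each statement's English description precedes it below -/
import Mathlib

section
/- Let (M, τ) be a tracial W*-probability space (a von Neumann algebra with faithful normal tracial state), let (x_1,…,x_n) and (y_1,…,y_n) be self-adjoint elements, and for 1 ≤ i ≤ n set z_i = x_1 + ⋯ + x_i + y_{i+1} + ⋯ + y_n and z_i⁰ = x_1 + ⋯ + x_{i−1} + y_{i+1} + ⋯ + y_n. Then for any z ∈ ℂ⁺, |τ[G_{z_n}(z)] − τ[G_{z_0}(z)]| ≤ ∑_{i=1}^n (|P_i| + |Q_i| + |R_i|), where P_i = τ[G_{z_i⁰}(z)(x_i − y_i)G_{z_i⁰}(z)], Q_i = τ[G_{z_i⁰}(z)x_i G_{z_i⁰}(z)x_i G_{z_i⁰}(z)] − τ[G_{z_i⁰}(z)y_i G_{z_i⁰}(z)y_i G_{z_i⁰}(z)], and R_i = τ[G_{z_i}(z)(x_i G_{z_i⁰}(z))³] − τ[G_{z_{i−1}}(z)(y_i G_{z_i⁰}(z))³]. -/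
/-- The resolvent `G_a(z) = (z·1 − a)⁻¹`. -/
noncomputable def cauchyResolvent {A : Type*} [Ring A] [Algebra ℂ A] (z : ℂ) (a : A) : A :=
  Ring.inverse (z • (1 : A) - a)

section aux

variable {A : Type*} [NormedRing A] [StarRing A] [CStarRing A]
    [NormedAlgebra ℂ A] [CompleteSpace A] [StarModule ℂ A]

lemma isUnit_aux (a : A) (ha : IsSelfAdjoint a) {z : ℂ} (hz : z.im ≠ 0) :
    IsUnit (z • (1 : A) - a) := by
  letI : CStarAlgebra A :=
    { ‹NormedRing A›, ‹StarRing A›, ‹CompleteSpace A›, ‹CStarRing A›,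
      ‹NormedAlgebra ℂ A›, ‹StarModule ℂ A› with }
  have hmem : z ∉ spectrum ℂ a := by
    intro h
    have h2 : z = (z.re : ℂ) := ha.mem_spectrum_eq_re h
    rw [h2] at hz
    exact hz (Complex.ofReal_im _)
  have := spectrum.notMem_iff.mp hmem
  rwa [Algebra.algebraMap_eq_smul_one] at this

lemma resolvent_expansion {A : Type*} [Ring A] [Algebra ℂ A] (z : ℂ) (a b : A)
    (hu : IsUnit (z • (1 : A) - a)) (hv : IsUnit (z • (1 : A) - (a + b))) :
    cauchyResolvent z (a + b) =
      cauchyResolvent z a + cauchyResolvent z a * b * cauchyResolvent z a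
        + cauchyResolvent z a * b * cauchyResolvent z a * b * cauchyResolvent z a
        + cauchyResolvent z (a + b) * (b * cauchyResolvent z a) ^ 3 := by
  set G0 := cauchyResolvent z a with hG0
  set G := cauchyResolvent z (a + b) with hG
  have h1 : (z • (1 : A) - a) * G0 = 1 := Ring.mul_inverse_cancel _ hu
  have h3 : (z • (1 : A) - (a + b)) * G = 1 := Ring.mul_inverse_cancel _ hv
  have h4 : G * (z • (1 : A) - (a + b)) = 1 := Ring.inverse_mul_cancel _ hv
  have key : G = G0 + G * b * G0 := by
    have hs : (z • (1 : A) - (a + b)) * (G0 + G * b * G0) = 1 := by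
      have hvb : z • (1 : A) - (a + b) = (z • (1 : A) - a) - b := by abel
      calc (z • (1 : A) - (a + b)) * (G0 + G * b * G0)
          = (z • (1 : A) - (a + b)) * G0 + ((z • (1 : A) - (a + b)) * G) * b * G0 := by
            noncomm_ring
        _ = ((z • (1 : A) - a) - b) * G0 + 1 * b * G0 := by rw [h3, hvb]
        _ = (z • (1 : A) - a) * G0 - b * G0 + b * G0 := by noncomm_ring
        _ = 1 := by rw [h1]; abel
    calc G = G * ((z • (1 : A) - (a + b)) * (G0 + G * b * G0)) := by rw [hs, mul_one]
      _ = (G * (z • (1 : A) - (a + b))) * (G0 + G * b * G0) := (mul_assoc _ _ _).symm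
      _ = G0 + G * b * G0 := by rw [h4, one_mul]
  conv_lhs => rw [key, key, key]
  noncomm_ring

set_option linter.unusedSectionVars false in
lemma IsSelfAdjoint.finsetSum {ι : Type*} (s : Finset ι) (f : ι → A)
    (h : ∀ i ∈ s, IsSelfAdjoint (f i)) : IsSelfAdjoint (∑ i ∈ s, f i) := by
  unfold IsSelfAdjoint
  rw [star_sum]
  exact Finset.sum_congr rfl h

end aux

open Finset in
/-- The noncommutative Lindeberg method for Cauchy transforms in a tracial
`W*`-probability space `(M, τ)`. -/
theorem lindeberg_method {A : Type*} [NormedRing A] [StarRing A] [CStarRing A]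
    [NormedAlgebra ℂ A] [CompleteSpace A] [StarModule ℂ A]
    (τ : A →ₗ[ℂ] ℂ) (hτ1 : τ 1 = 1)
    (htrace : ∀ a b : A, τ (a * b) = τ (b * a))
    (hpos : ∀ a : A, 0 ≤ (τ (star a * a)).re) (hreal : ∀ a : A, (τ (star a * a)).im = 0)
    (hfaithful : ∀ a : A, τ (star a * a) = 0 → a = 0)
    (n : ℕ) (x y : ℕ → A)
    (hx : ∀ i ∈ Icc 1 n, IsSelfAdjoint (x i)) (hy : ∀ i ∈ Icc 1 n, IsSelfAdjoint (y i))
    (z : ℂ) (hz : 0 < z.im)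
    -- `Z i = x₁ + ⋯ + x_i + y_{i+1} + ⋯ + y_n`
    (Z : ℕ → A) (hZ : ∀ i, Z i = (∑ j ∈ Icc 1 i, x j) + ∑ j ∈ Icc (i + 1) n, y j)
    -- `Z0 i = x₁ + ⋯ + x_{i-1} + y_{i+1} + ⋯ + y_n`
    (Z0 : ℕ → A) (hZ0 : ∀ i, Z0 i = (∑ j ∈ Icc 1 (i - 1), x j) + ∑ j ∈ Icc (i + 1) n, y j) :
    norm (τ (cauchyResolvent z (Z n)) - τ (cauchyResolvent z (Z 0)))
      ≤ ∑ i ∈ Icc 1 n,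
          (norm (τ (cauchyResolvent z (Z0 i) * (x i - y i) * cauchyResolvent z (Z0 i)))
          + norm
              (τ (cauchyResolvent z (Z0 i) * x i * cauchyResolvent z (Z0 i) * x i * cauchyResolvent z (Z0 i))
              - τ (cauchyResolvent z (Z0 i) * y i * cauchyResolvent z (Z0 i) * y i * cauchyResolvent z (Z0 i)))
          + norm
              (τ (cauchyResolvent z (Z i) * (x i * cauchyResolvent z (Z0 i)) ^ 3)
              - τ (cauchyResolvent z (Z (i - 1)) * (y i * cauchyResolvent z (Z0 i)) ^ 3))) := by
  have hzim : z.im ≠ 0 := ne_of_gt hz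
  set f : ℕ → ℂ := fun i => τ (cauchyResolvent z (Z i)) with hf
  set g : ℕ → ℝ := fun i =>
          (norm (τ (cauchyResolvent z (Z0 i) * (x i - y i) * cauchyResolvent z (Z0 i)))
          + norm
              (τ (cauchyResolvent z (Z0 i) * x i * cauchyResolvent z (Z0 i) * x i * cauchyResolvent z (Z0 i))
              - τ (cauchyResolvent z (Z0 i) * y i * cauchyResolvent z (Z0 i) * y i * cauchyResolvent z (Z0 i)))
          + norm
              (τ (cauchyResolvent z (Z i) * (x i * cauchyResolvent z (Z0 i)) ^ 3)
              - τ (cauchyResolvent z (Z (i - 1)) * (y i * cauchyResolvent z (Z0 i)) ^ 3))) with hg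
  -- the per-step bound
  have step : ∀ k, 1 ≤ k → k ≤ n → norm (f k - f (k - 1)) ≤ g k := by
    intro k hk1 hkn
    have hkmem : k ∈ Icc 1 n := mem_Icc.mpr ⟨hk1, hkn⟩
    -- decompositions
    have hZk : Z k = Z0 k + x k := by
      rw [hZ k, hZ0 k]
      have hk' : k = (k - 1) + 1 := (Nat.succ_pred_eq_of_pos hk1).symm
      have h5 : ∑ j ∈ Icc 1 k, x j = (∑ j ∈ Icc 1 (k - 1), x j) + x k := by
        conv_lhs => rw [hk']
        rw [Finset.sum_Icc_succ_top (Nat.le_add_left 1 _)]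
        rw [← hk']
      rw [h5]; abel
    have hZk1 : Z (k - 1) = Z0 k + y k := by
      rw [hZ (k - 1), hZ0 k]
      have hk' : k - 1 + 1 = k := Nat.succ_pred_eq_of_pos hk1
      rw [hk']
      have h5 : ∑ j ∈ Icc k n, y j = y k + ∑ j ∈ Icc (k + 1) n, y j := by
        rw [Finset.Icc_eq_cons_Ioc hkn, Finset.sum_cons, ← Finset.Icc_add_one_left_eq_Ioc]
      rw [h5]; abel
    -- self-adjointness
    have hsa_a : IsSelfAdjoint (Z0 k) := by
      rw [hZ0 k]
      refine IsSelfAdjoint.add (IsSelfAdjoint.finsetSum _ _ fun j hj => ?_)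
        (IsSelfAdjoint.finsetSum _ _ fun j hj => ?_)
      · exact hx j (mem_Icc.mpr ⟨(mem_Icc.mp hj).1, le_trans (mem_Icc.mp hj).2
          (le_trans (Nat.sub_le k 1) hkn)⟩)
      · exact hy j (mem_Icc.mpr ⟨le_trans (Nat.le_add_left 1 k) (mem_Icc.mp hj).1,
          (mem_Icc.mp hj).2⟩)
    have hsa_b : IsSelfAdjoint (x k) := hx k hkmem
    have hsa_c : IsSelfAdjoint (y k) := hy k hkmem
    have hu : IsUnit (z • (1 : A) - Z0 k) := isUnit_aux _ hsa_a hzim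
    have hvb : IsUnit (z • (1 : A) - (Z0 k + x k)) := isUnit_aux _ (hsa_a.add hsa_b) hzim
    have hvc : IsUnit (z • (1 : A) - (Z0 k + y k)) := isUnit_aux _ (hsa_a.add hsa_c) hzim
    have exb := resolvent_expansion z (Z0 k) (x k) hu hvb
    have exc := resolvent_expansion z (Z0 k) (y k) hu hvc
    rw [← hZk] at exb
    rw [← hZk1] at exc
    have hdiff : f k - f (k - 1)
        = τ (cauchyResolvent z (Z0 k) * (x k - y k) * cauchyResolvent z (Z0 k))
          + (τ (cauchyResolvent z (Z0 k) * x k * cauchyResolvent z (Z0 k) * x k * cauchyResolvent z (Z0 k))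
            - τ (cauchyResolvent z (Z0 k) * y k * cauchyResolvent z (Z0 k) * y k * cauchyResolvent z (Z0 k)))
          + (τ (cauchyResolvent z (Z k) * (x k * cauchyResolvent z (Z0 k)) ^ 3)
            - τ (cauchyResolvent z (Z (k - 1)) * (y k * cauchyResolvent z (Z0 k)) ^ 3)) := by
      have hmul : cauchyResolvent z (Z0 k) * (x k - y k) * cauchyResolvent z (Z0 k)
          = cauchyResolvent z (Z0 k) * x k * cauchyResolvent z (Z0 k)
            - cauchyResolvent z (Z0 k) * y k * cauchyResolvent z (Z0 k) := by noncomm_ring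
      show τ (cauchyResolvent z (Z k)) - τ (cauchyResolvent z (Z (k - 1))) = _
      conv_lhs => rw [exb, exc]
      rw [hmul]
      simp only [map_add, map_sub]
      ring
    rw [hdiff]
    show _ ≤ _ + _ + _
    exact (norm_add_le _ _).trans (by gcongr; exact norm_add_le _ _)
  -- telescoping
  have htel : f n - f 0 = ∑ i ∈ range n, (f (i + 1) - f i) := (Finset.sum_range_sub f n).symm
  have hsum : ∑ i ∈ Icc 1 n, g i = ∑ i ∈ range n, g (i + 1) := by
    rw [← Finset.Ico_add_one_right_eq_Icc, Finset.sum_Ico_eq_sum_range]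
    simp [add_comm]
  calc norm (f n - f 0)
      = norm (∑ i ∈ range n, (f (i + 1) - f i)) := by rw [htel]
    _ ≤ ∑ i ∈ range n, norm (f (i + 1) - f i) := norm_sum_le _ _
    _ ≤ ∑ i ∈ range n, g (i + 1) := by
        refine Finset.sum_le_sum fun i hi => ?_
        have h6 := step (i + 1) (Nat.le_add_left 1 i) (Nat.succ_le_of_lt (Finset.mem_range.mp hi))
        simpa using h6
    _ = ∑ i ∈ Icc 1 n, g i := hsum.symm
end

section
/- Let (M, τ) be a tracial W*-probability space and B a von Neumann subalgebra. Let x, y be self-adjoint, each free from a self-adjoint element w with amalgamation over B, with E[x|B] = E[y|B] = 0 and E[xbx|B] = E[yby|B] for all b ∈ B. Then for all z ∈ ℂ⁺, τ[G_w(z) x G_w(z) x G_w(z)] = τ[G_w(z) y G_w(z) y G_w(z)]. -/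
/-- `E` is a `τ`-preserving conditional expectation onto the subalgebra `B`. -/
def IsCondExp {A : Type*} [Ring A] [Algebra ℂ A] (τ : A →ₗ[ℂ] ℂ)
    (B : Subalgebra ℂ A) (E : A →ₗ[ℂ] A) : Prop :=
  (∀ a : A, E a ∈ B) ∧ (∀ b ∈ B, E b = b) ∧ (∀ a : A, τ (E a) = τ a) ∧
    (∀ a : A, ∀ b₁ ∈ B, ∀ b₂ ∈ B, E (b₁ * a * b₂) = b₁ * E a * b₂)

/-- Freeness with amalgamation (with respect to the conditional expectation `E`) of a
family of subalgebras: alternating products of `E`-centered elements are `E`-centered. -/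
def FreeAmalgFamily {A : Type*} [Ring A] [Algebra ℂ A] {ι : Type*}
    (E : A →ₗ[ℂ] A) (Malg : ι → Subalgebra ℂ A) : Prop :=
  ∀ (m : ℕ), 2 ≤ m → ∀ (a : ℕ → A) (κ : ℕ → ι),
    (∀ i < m, E (a i) = 0) → (∀ i < m, a i ∈ Malg (κ i)) →
    (∀ i, i + 1 < m → κ i ≠ κ (i + 1)) →
    E (((List.range m).map a).prod) = 0

lemma key_expect {A : Type*} [Ring A] [Algebra ℂ A]
    (B S T : Subalgebra ℂ A) (hBS : B ≤ S) (hBT : B ≤ T)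
    (E : A →ₗ[ℂ] A)
    (hB : ∀ a : A, E a ∈ B) (hfix : ∀ b ∈ B, E b = b)
    (hmod : ∀ a : A, ∀ b₁ ∈ B, ∀ b₂ ∈ B, E (b₁ * a * b₂) = b₁ * E a * b₂)
    (hfree : FreeAmalgFamily E (fun b : Bool => if b then S else T))
    (x g : A) (hxS : x ∈ S) (hgT : g ∈ T) (hEx : E x = 0) :
    E (g * g * x * g * x) = E (g * g) * E (x * E g * x) := by
  set b1 := E g with hb1
  set b2 := E (g * g) with hb2
  have hb1B : b1 ∈ B := hB g
  have hb2B : b2 ∈ B := hB (g * g)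
  set c1 := g - b1 with hc1
  set c2 := g * g - b2 with hc2
  have hEc1 : E c1 = 0 := by
    rw [hc1, map_sub, hfix b1 hb1B, ← hb1, sub_self]
  have hEc2 : E c2 = 0 := by
    rw [hc2, map_sub, hfix b2 hb2B, ← hb2, sub_self]
  have hc1T : c1 ∈ T := sub_mem hgT (hBT hb1B)
  have hc2T : c2 ∈ T := sub_mem (mul_mem hgT hgT) (hBT hb2B)
  -- freeness, m = 3 : E (x * c1 * x) = 0
  have free3 : E (x * c1 * x) = 0 := by
    have := hfree 3 (by norm_num) (fun i => if i = 1 then c1 else x)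
      (fun i => i != 1)
      (by intro i hi
          match i, hi with
          | 0, _ => simpa using hEx
          | 1, _ => simpa using hEc1
          | 2, _ => simpa using hEx)
      (by intro i hi
          match i, hi with
          | 0, _ => simpa using hxS
          | 1, _ => simpa using hc1T
          | 2, _ => simpa using hxS)
      (by intro i hi
          match i, hi with
          | 0, _ => simp
          | 1, _ => simp)
    simpa [List.range_succ, mul_assoc] using this
  -- freeness, m = 4 : E (c2 * x * c1 * x) = 0
  have free4 : E (c2 * x * c1 * x) = 0 := by
    have := hfree 4 (by norm_num)
      (fun i => if i = 0 then c2 else if i = 2 then c1 else x)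
      (fun i => i % 2 == 1)
      (by intro i hi
          match i, hi with
          | 0, _ => simpa using hEc2
          | 1, _ => simpa using hEx
          | 2, _ => simpa using hEc1
          | 3, _ => simpa using hEx)
      (by intro i hi
          match i, hi with
          | 0, _ => simpa using hc2T
          | 1, _ => simpa using hxS
          | 2, _ => simpa using hc1T
          | 3, _ => simpa using hxS)
      (by intro i hi
          match i, hi with
          | 0, _ => simp
          | 1, _ => simp
          | 2, _ => simp)
    simpa [List.range_succ, mul_assoc] using this
  -- middle term : E (c2 * (x * b1 * x)) = 0
  set d := E (x * b1 * x) with hd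
  have hdB : d ∈ B := hB _
  have hrS : x * b1 * x - d ∈ S := sub_mem (mul_mem (mul_mem hxS (hBS hb1B)) hxS) (hBS hdB)
  have hEr : E (x * b1 * x - d) = 0 := by
    rw [map_sub, hfix d hdB, ← hd, sub_self]
  have free2 : E (c2 * (x * b1 * x - d)) = 0 := by
    have := hfree 2 le_rfl
      (fun i => if i = 0 then c2 else x * b1 * x - d)
      (fun i => i == 1)
      (by intro i hi
          match i, hi with
          | 0, _ => simpa using hEc2
          | 1, _ => simpa using hEr)
      (by intro i hi
          match i, hi with
          | 0, _ => simpa using hc2T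
          | 1, _ => simpa using hrS)
      (by intro i hi
          match i, hi with
          | 0, _ => simp)
    simpa [List.range_succ] using this
  have hEc2d : E (c2 * d) = 0 := by
    have := hmod c2 1 (one_mem B) d hdB
    rw [one_mul, one_mul] at this
    rw [this, hEc2, zero_mul]
  have mid : E (c2 * x * b1 * x) = 0 := by
    have h : c2 * x * b1 * x = c2 * d + c2 * (x * b1 * x - d) := by noncomm_ring
    rw [h, map_add, hEc2d, free2, add_zero]
  have main : E (b2 * x * c1 * x) = 0 := by
    have h : b2 * x * c1 * x = b2 * (x * c1 * x) * 1 := by noncomm_ring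
    rw [h, hmod _ _ hb2B _ (one_mem B), free3, mul_zero, zero_mul]
  have hbterm : E (b2 * x * b1 * x) = b2 * E (x * b1 * x) := by
    have h : b2 * x * b1 * x = b2 * (x * b1 * x) * 1 := by noncomm_ring
    rw [h, hmod _ _ hb2B _ (one_mem B), mul_one]
  have expand : g * g * x * g * x
      = b2 * x * b1 * x + (b2 * x * c1 * x + (c2 * x * b1 * x + c2 * x * c1 * x)) := by
    rw [hc1, hc2]; noncomm_ring
  rw [expand, map_add, map_add, map_add, main, mid, free4, hbterm]
  simp
  rfl

/-- If `x, y` are `B`-centered, each free from `w` with amalgamation over `B`, and have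
matching `B`-valued second moments, then the second-order Lindeberg terms agree:
`τ[G_w x G_w x G_w] = τ[G_w y G_w y G_w]` for every `z ∈ ℂ⁺`. -/
theorem trace_resolvent_second_order_match {A : Type*} [NormedRing A] [StarRing A]
    [CStarRing A] [NormedAlgebra ℂ A] [CompleteSpace A] [StarModule ℂ A]
    (τ : A →ₗ[ℂ] ℂ) (hτ1 : τ 1 = 1)
    (htrace : ∀ a b : A, τ (a * b) = τ (b * a))
    (hpos : ∀ a : A, 0 ≤ (τ (star a * a)).re) (hreal : ∀ a : A, (τ (star a * a)).im = 0)
    (hfaithful : ∀ a : A, τ (star a * a) = 0 → a = 0)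
    (B Sx Sy T : Subalgebra ℂ A) (hBSx : B ≤ Sx) (hBSy : B ≤ Sy) (hBT : B ≤ T)
    (E : A →ₗ[ℂ] A) (hE : IsCondExp τ B E)
    (hfreex : FreeAmalgFamily E (fun b : Bool => if b then Sx else T))
    (hfreey : FreeAmalgFamily E (fun b : Bool => if b then Sy else T))
    (x y w : A) (hx : IsSelfAdjoint x) (hy : IsSelfAdjoint y) (hw : IsSelfAdjoint w)
    (hxS : x ∈ Sx) (hyS : y ∈ Sy) (hwT : w ∈ T)
    (hEx : E x = 0) (hEy : E y = 0)
    (hsecond : ∀ b ∈ B, E (x * b * x) = E (y * b * y))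
    (z : ℂ) (hz : 0 < z.im) (hres : cauchyResolvent z w ∈ T) :
    τ (cauchyResolvent z w * x * cauchyResolvent z w * x * cauchyResolvent z w)
      = τ (cauchyResolvent z w * y * cauchyResolvent z w * y * cauchyResolvent z w) := by

  obtain ⟨hB, hfix, htr, hmod⟩ := hE
  set g := cauchyResolvent z w with hg
  have cyc : ∀ u : A, τ (g * u * g * u * g) = τ (g * g * u * g * u) := by
    intro u
    have h1 : g * u * g * u * g = (g * u * g * u) * g := by noncomm_ring
    have h2 : g * (g * u * g * u) = g * g * u * g * u := by noncomm_ring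
    rw [h1, htrace, h2]
  have keyx := key_expect B Sx T hBSx hBT E hB hfix hmod hfreex x g hxS hres hEx
  have keyy := key_expect B Sy T hBSy hBT E hB hfix hmod hfreey y g hyS hres hEy
  rw [cyc x, cyc y, ← htr (g * g * x * g * x), ← htr (g * g * y * g * y),
    keyx, keyy, hsecond (E g) (hB g)]
end
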